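/- Every almost full subset of [0,1] is nonempty; equivalently, for every regular sequence (h_n) of functions on [0,1] there exists a point x ∈ [0,1] at which the series ∑_{n=0}^∞ h_n(x) converges. -/
import Mathlib


open MeasureTheory Filter Set

noncomputable section

/-- A sequence of functions on `[0,1]` is *regular* if each member is continuous and
nonnegative on `[0,1]` and has integral over `[0,1]` strictly less than `2⁻ⁿ`. -/
def RegularSeq (h : ℕ → ℝ → ℝ) : Prop :=
  ∀ n : ℕ, ContinuousOn (h n) (Set.Icc 0 1) ∧
    (∀ x ∈ Set.Icc (0:ℝ) 1, 0 ≤ h n x) ∧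
    (∫ x in (0:ℝ)..1, h n x) < (1/2 : ℝ) ^ n

/-- The set `Ω(𝔥)` of points of `[0,1]` at which the partial sums of `∑ hₙ(x)` are
bounded above. -/
def Omega (h : ℕ → ℝ → ℝ) : Set ℝ :=
  {x ∈ Set.Icc (0:ℝ) 1 | ∃ γ : ℝ, ∀ m : ℕ, ∑ n ∈ Finset.range (m+1), h n x ≤ γ}

/-- A subset `X ⊆ [0,1]` is *almost full* if `Ω(𝔥) ⊆ X` for some regular sequence `𝔥`. -/
def AlmostFull (X : Set ℝ) : Prop :=
  ∃ h : ℕ → ℝ → ℝ, RegularSeq h ∧ Omega h ⊆ X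

/-- Every almost full subset of `[0,1]` is nonempty; equivalently, for every regular
sequence there is a point where the series converges. -/
theorem stmt2 :
    (∀ X : Set ℝ, AlmostFull X → X.Nonempty) ∧
    (∀ h : ℕ → ℝ → ℝ, RegularSeq h →
      ∃ x ∈ Set.Icc (0:ℝ) 1, Summable (fun n => h n x)) := by
  have main : ∀ h : ℕ → ℝ → ℝ, RegularSeq h →
      ∃ x ∈ Set.Icc (0:ℝ) 1, Summable (fun n => h n x) := by
    intro h hreg
    set H : ℕ → ℝ → ℝ := fun n x => h n (Set.projIcc 0 1 zero_le_one x) with hHdef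
    have hHcont : ∀ n, Continuous (H n) := fun n =>
      (hreg n).1.comp_continuous (continuous_subtype_val.comp continuous_projIcc)
        (fun x => (Set.projIcc 0 1 zero_le_one x).2)
    have hHnonneg : ∀ n x, 0 ≤ H n x := fun n x =>
      (hreg n).2.1 _ (Set.projIcc 0 1 zero_le_one x).2
    have hHeq : ∀ n, ∀ x ∈ Set.Icc (0:ℝ) 1, H n x = h n x := by
      intro n x hx
      simp [hHdef, Set.projIcc_of_mem zero_le_one hx]
    have hint : ∀ n, (∫ x in Set.Icc (0:ℝ) 1, H n x) < (1/2 : ℝ) ^ n := by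
      intro n
      have h1 : (∫ x in Set.Icc (0:ℝ) 1, H n x) = ∫ x in (0:ℝ)..1, H n x := by
        rw [intervalIntegral.integral_of_le zero_le_one,
          MeasureTheory.integral_Icc_eq_integral_Ioc]
      have h2 : (∫ x in (0:ℝ)..1, H n x) = ∫ x in (0:ℝ)..1, h n x :=
        intervalIntegral.integral_congr
          (fun x hx => hHeq n x (by rwa [Set.uIcc_of_le zero_le_one] at hx))
      rw [h1, h2]; exact (hreg n).2.2
    have hmeas : ∀ n, AEMeasurable (fun x => ENNReal.ofReal (H n x))
        (volume.restrict (Set.Icc (0:ℝ) 1)) := fun n =>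
      (ENNReal.measurable_ofReal.comp (hHcont n).measurable).aemeasurable
    have hlint : ∀ n, (∫⁻ x in Set.Icc (0:ℝ) 1, ENNReal.ofReal (H n x)) ≤
        ENNReal.ofReal ((1/2 : ℝ) ^ n) := by
      intro n
      rw [← MeasureTheory.ofReal_integral_eq_lintegral_ofReal
        ((hHcont n).integrableOn_Icc) (Filter.Eventually.of_forall fun x => hHnonneg n x)]
      exact ENNReal.ofReal_le_ofReal (hint n).le
    have htsum : (∫⁻ x in Set.Icc (0:ℝ) 1, ∑' n, ENNReal.ofReal (H n x)) ≤ 2 := by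
      rw [MeasureTheory.lintegral_tsum hmeas]
      calc (∑' n, ∫⁻ x in Set.Icc (0:ℝ) 1, ENNReal.ofReal (H n x))
          ≤ ∑' n : ℕ, ENNReal.ofReal ((1/2 : ℝ) ^ n) := ENNReal.tsum_le_tsum hlint
        _ = ∑' n : ℕ, (2 : ENNReal)⁻¹ ^ n := by
            congr 1; funext n
            rw [ENNReal.ofReal_pow (by norm_num)]
            congr 1
            rw [one_div, ENNReal.ofReal_inv_of_pos two_pos, ENNReal.ofReal_ofNat]
        _ = 2 := by
            rw [ENNReal.tsum_geometric, ENNReal.one_sub_inv_two]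
            simp
    have hfmeas : Measurable (fun x => ∑' n, ENNReal.ofReal (H n x)) :=
      Measurable.ennreal_tsum fun n => ENNReal.measurable_ofReal.comp (hHcont n).measurable
    have hae : ∀ᵐ x ∂(volume.restrict (Set.Icc (0:ℝ) 1)),
        (∑' n, ENNReal.ofReal (H n x)) < ⊤ :=
      MeasureTheory.ae_lt_top hfmeas (lt_of_le_of_lt htsum (by norm_num)).ne
    have hmemae : ∀ᵐ x ∂(volume.restrict (Set.Icc (0:ℝ) 1)), x ∈ Set.Icc (0:ℝ) 1 :=
      MeasureTheory.ae_restrict_mem measurableSet_Icc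
    have hne : (volume.restrict (Set.Icc (0:ℝ) 1)) ≠ 0 := by
      intro hc
      have := congrArg (fun μ : Measure ℝ => μ Set.univ) hc
      simp [Measure.restrict_apply_univ, Real.volume_Icc] at this
    have : (ae (volume.restrict (Set.Icc (0:ℝ) 1))).NeBot := MeasureTheory.ae_neBot.2 hne
    obtain ⟨x, hx, hxlt⟩ := (hmemae.and hae).exists
    refine ⟨x, hx, ?_⟩
    have hs : Summable (fun n => (ENNReal.ofReal (H n x)).toReal) :=
      ENNReal.summable_toReal hxlt.ne
    have : Summable (fun n => H n x) := by
      refine hs.congr fun n => ?_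
      exact ENNReal.toReal_ofReal (hHnonneg n x)
    exact this.congr fun n => hHeq n x hx
  refine ⟨?_, main⟩
  rintro X ⟨h, hreg, hsub⟩
  obtain ⟨x, hx, hsum⟩ := main h hreg
  refine ⟨x, hsub ⟨hx, ∑' n, h n x, fun m => ?_⟩⟩
  exact Summable.sum_le_tsum _ (fun i _ => (hreg i).2.1 x hx) hsum
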